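/- Let α ∈ [0,1]. There exists an absolute constant C > 0 such that for all s > 0, all r ≥ 0 and all u ∈ [0,1]: min{1, s^{−1}(1+r)} / (1 + s^{−α} r u) ≤ C · (1 + s^{1−α} u)^{−1}. -/
import Mathlib


open Real Set

noncomputable section

/-- there is an absolute constant `C > 0` such that for all
`α ∈ [0,1]`, `s > 0`, `r ≥ 0` and `u ∈ [0,1]`:
`min{1, s⁻¹(1+r)} / (1 + s^{-α} r u) ≤ C (1 + s^{1-α} u)⁻¹`. -/
theorem stmt19 :
    ∃ C > (0 : ℝ), ∀ α ∈ Set.Icc (0 : ℝ) 1, ∀ s r u : ℝ,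
      0 < s → 0 ≤ r → u ∈ Set.Icc (0 : ℝ) 1 →
      min 1 (s⁻¹ * (1 + r)) / (1 + s ^ (-α) * r * u) ≤ C * (1 + s ^ (1 - α) * u)⁻¹ := by
  refine ⟨2, by norm_num, ?_⟩
  rintro α ⟨hα0, hα1⟩ s r u hs hr ⟨hu0, hu1⟩
  have hA : (0:ℝ) < s ^ (-α) := Real.rpow_pos_of_pos hs _
  have hB : (0:ℝ) < s ^ (1-α) := Real.rpow_pos_of_pos hs _
  have hx : (0:ℝ) < 1 + s ^ (-α) * r * u := by positivity
  have hy : (0:ℝ) < 1 + s ^ (1-α) * u := by positivity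
  have hBA : s ^ (1-α) = s * s ^ (-α) := by
    rw [show (1-α : ℝ) = 1 + -α by ring, Real.rpow_add hs, Real.rpow_one]
  set m := min 1 (s⁻¹ * (1 + r)) with hm
  have hm0 : 0 ≤ m := le_min zero_le_one (by positivity)
  have hm1 : m ≤ 1 := min_le_left _ _
  have hm2 : m ≤ s⁻¹ * (1 + r) := min_le_right _ _
  rw [← div_eq_mul_inv, div_le_div_iff₀ hx hy]
  -- key: m * (s^(1-α) * u) ≤ 1 + s^(-α) * r * u
  have key : m * (s ^ (1-α) * u) ≤ 1 + s ^ (-α) * r * u := by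
    rcases le_total s 1 with hs1 | hs1
    · have hB1 : s ^ (1-α) ≤ 1 :=
        Real.rpow_le_one hs.le hs1 (by linarith)
      nlinarith [mul_nonneg (mul_nonneg hA.le hr) hu0, mul_nonneg hB.le hu0]
    · have hA1 : s ^ (-α) ≤ 1 :=
        Real.rpow_le_one_of_one_le_of_nonpos hs1 (by linarith)
      have hinv : s⁻¹ * s ^ (1-α) = s ^ (-α) := by
        rw [hBA]; field_simp
      have h1 : m * (s ^ (1-α) * u) ≤ (s⁻¹ * (1 + r)) * (s ^ (1-α) * u) := by
        apply mul_le_mul_of_nonneg_right hm2 (by positivity)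
      have h2 : (s⁻¹ * (1 + r)) * (s ^ (1-α) * u) = (1 + r) * (s ^ (-α) * u) := by
        rw [← hinv]; ring
      have hAu : s ^ (-α) * u ≤ 1 := by
        nlinarith
      nlinarith [mul_nonneg hA.le hu0, mul_nonneg (mul_nonneg hA.le hr) hu0]
  nlinarith [mul_nonneg (mul_nonneg hA.le hr) hu0]

end
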